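/- Consider the linear system ẋ = Ax + Bu on a Banach space X, where A generates the strongly continuous semigroup (T_t)_{t≥0} and B : U → X is a bounded linear operator, with mild solutions φ(t,x,u) = T_t x + ∫_0^t T_{t−s} B u(s) ds. The following statements are equivalent: (i) the system is ISS (there exist β ∈ KL and γ ∈ K with ‖φ(t,x,u)‖_X ≤ β(‖x‖_X, t) + γ(sup_{s≥0}‖u(s)‖_U) for all x ∈ X, all globally bounded piecewise continuous u and all t ≥ 0); (ii) the system is 0-UGAS (there exists β ∈ KL with ‖T_t x‖_X ≤ β(‖x‖_X, t) for all x ∈ X and t ≥ 0); (iii) the semigroup (T_t)_{t≥0} is exponentially stable (there exist M, λ > 0 with ‖T_t‖ ≤ M e^{−λt} for all t ≥ 0). -/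

import Mathlib

open Set Filter Topology MeasureTheory

section Defs

variable {X : Type*} [NormedAddCommGroup X] [NormedSpace ℝ X] [CompleteSpace X]
variable {U : Type*} [NormedAddCommGroup U] [NormedSpace ℝ U]

/-- Class `K` functions: continuous, strictly increasing on `[0,∞)` and vanishing at `0`. -/
def ClassK (γ : ℝ → ℝ) : Prop :=
  ContinuousOn γ (Ici 0) ∧ StrictMonoOn γ (Ici 0) ∧ γ 0 = 0

/-- Class `K∞` functions: class `K` and unbounded. -/
def ClassKinf (γ : ℝ → ℝ) : Prop :=
  ClassK γ ∧ ∀ M : ℝ, ∃ r : ℝ, 0 ≤ r ∧ M < γ r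

/-- Class `KL` functions. -/
def ClassKL (β : ℝ → ℝ → ℝ) : Prop :=
  ContinuousOn (fun p : ℝ × ℝ => β p.1 p.2) (Ici 0 ×ˢ Ici 0) ∧
  (∀ t : ℝ, 0 ≤ t → ClassK (fun r => β r t)) ∧
  (∀ r : ℝ, 0 < r →
    StrictAntiOn (fun t => β r t) (Ici 0) ∧ Tendsto (fun t => β r t) atTop (nhds 0))

/-- Continuous positive definite functions on `[0,∞)`. -/
def ClassPD (α : ℝ → ℝ) : Prop :=
  ContinuousOn α (Ici 0) ∧ α 0 = 0 ∧ ∀ r : ℝ, 0 < r → 0 < α r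

/-- A strongly continuous semigroup of bounded linear operators on `X`,
parametrized by `t : ℝ` (only the values for `t ≥ 0` matter). -/
def IsC0Semigroup (T : ℝ → X →L[ℝ] X) : Prop :=
  T 0 = 1 ∧ (∀ s : ℝ, 0 ≤ s → ∀ t : ℝ, 0 ≤ t → T (s + t) = (T s).comp (T t)) ∧
  ∀ x : X, ContinuousOn (fun t => T t x) (Ici 0)

/-- Piecewise continuous functions: on each compact interval, continuous up to
finitely many exceptional points. -/
def PiecewiseContinuous (u : ℝ → U) : Prop :=
  ∀ a b : ℝ, ∃ S : Finset ℝ, ∀ t ∈ Icc a b, t ∉ S → ContinuousAt u t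

/-- Admissible inputs: globally bounded (on `[0,∞)`) piecewise continuous functions. -/
def AdmissibleInput (u : ℝ → U) : Prop :=
  PiecewiseContinuous u ∧ ∃ C : ℝ, ∀ t : ℝ, 0 ≤ t → ‖u t‖ ≤ C

/-- Admissible disturbances: piecewise continuous functions with values in the
closed unit ball of `U`. -/
def AdmissibleDisturbance (d : ℝ → U) : Prop :=
  PiecewiseContinuous d ∧ ∀ t : ℝ, 0 ≤ t → ‖d t‖ ≤ 1

/-- The sup-norm of an input over `[0,∞)`. -/
noncomputable def supNorm (u : ℝ → U) : ℝ := ⨆ t : Ici (0:ℝ), ‖u ↑t‖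

/-- Mild solutions of `ẋ = Ax + f(x,u)`:
`φ(t) = T_t x₀ + ∫_0^t T_{t-s} f(φ(s), u(s)) ds`, continuous on `[0,∞)`. -/
def IsMildSolution (T : ℝ → X →L[ℝ] X) (f : X → U → X) (x₀ : X) (u : ℝ → U)
    (φ : ℝ → X) : Prop :=
  φ 0 = x₀ ∧ ContinuousOn φ (Ici 0) ∧
  ∀ t : ℝ, 0 ≤ t → φ t = T t x₀ + ∫ s in (0:ℝ)..t, T (t - s) (f (φ s) (u s))

/-- `f : X × U → X` is bi-Lipschitz continuous on bounded sets. -/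
def BiLipschitzOnBounded (f : X → U → X) : Prop :=
  (∀ C : ℝ, 0 < C → ∃ L : ℝ, 0 < L ∧ ∀ x y : X, ‖x‖ ≤ C → ‖y‖ ≤ C → ∀ v : U,
      ‖f x v - f y v‖ ≤ L * ‖x - y‖) ∧
  (∀ C : ℝ, 0 < C → ∃ L : ℝ, 0 < L ∧ ∀ u v : U, ‖u‖ ≤ C → ‖v‖ ≤ C → ∀ x : X,
      ‖f x u - f x v‖ ≤ L * ‖u - v‖)

/-- Lipschitz continuity on bounded balls. -/
def LipschitzOnBoundedBalls {Y : Type*} [NormedAddCommGroup Y] (V : X → Y) : Prop :=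
  ∀ r : ℝ, 0 < r → ∃ L : ℝ, 0 < L ∧ ∀ x y : X, ‖x‖ ≤ r → ‖y‖ ≤ r →
    ‖V x - V y‖ ≤ L * ‖x - y‖

/-- The (upper right) Dini derivative of `V` along a trajectory `ψ`, at the point `x`. -/
noncomputable def DiniDerivAlong (V : X → ℝ) (ψ : ℝ → X) (x : X) : EReal :=
  Filter.limsup (fun t : ℝ => (((V (ψ t) - V x) / t : ℝ) : EReal)) (nhdsWithin 0 (Ioi 0))

/-- Input-to-state stability of `ẋ = Ax + f(x,u)`: forward completeness plus
a `KL`/`K` estimate on all mild solutions. -/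
def ISSProp (T : ℝ → X →L[ℝ] X) (f : X → U → X) : Prop :=
  (∀ (x : X) (u : ℝ → U), AdmissibleInput u → ∃ ψs : ℝ → X, IsMildSolution T f x u ψs) ∧
  ∃ (β : ℝ → ℝ → ℝ) (γ : ℝ → ℝ), ClassKL β ∧ ClassK γ ∧
    ∀ (x : X) (u : ℝ → U) (ψs : ℝ → X), AdmissibleInput u → IsMildSolution T f x u ψs →
      ∀ t : ℝ, 0 ≤ t → ‖ψs t‖ ≤ β ‖x‖ t + γ (supNorm u)

/-- Weak uniform robust asymptotic stability of `ẋ = Ax + f(x,u)`: there is a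
feedback `φfb ≥ ψ(‖·‖)`, Lipschitz on bounded balls, such that the closed-loop
system `ẋ = Ax + f(x, d(t)·φfb(x))` is forward complete and UGAS, uniformly over
all piecewise continuous disturbances with values in the unit ball. -/
def WURSProp (T : ℝ → X →L[ℝ] X) (f : X → U → X) : Prop :=
  ∃ (φfb : X → ℝ) (ψ : ℝ → ℝ) (β : ℝ → ℝ → ℝ),
    (∀ x : X, 0 ≤ φfb x) ∧ LipschitzOnBoundedBalls φfb ∧ ClassKinf ψ ∧
    (∀ x : X, ψ ‖x‖ ≤ φfb x) ∧ ClassKL β ∧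
    ∀ (x : X) (d : ℝ → U), AdmissibleDisturbance d →
      (∃ ψs : ℝ → X, IsMildSolution T (fun z v => f z (φfb z • v)) x d ψs) ∧
      ∀ ψs : ℝ → X, IsMildSolution T (fun z v => f z (φfb z • v)) x d ψs →
        ∀ t : ℝ, 0 ≤ t → ‖ψs t‖ ≤ β ‖x‖ t

/-- Existence of a coercive ISS Lyapunov function (in implication form) which is
Lipschitz continuous on bounded balls. -/
def CoerciveISSLF (T : ℝ → X →L[ℝ] X) (f : X → U → X) : Prop :=
  ∃ (V : X → ℝ) (ψ₁ ψ₂ χ α : ℝ → ℝ),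
    LipschitzOnBoundedBalls V ∧ ClassKinf ψ₁ ∧ ClassKinf ψ₂ ∧ ClassK χ ∧ ClassPD α ∧
    (∀ x : X, ψ₁ ‖x‖ ≤ V x ∧ V x ≤ ψ₂ ‖x‖) ∧
    ∀ (x : X) (u : ℝ → U), AdmissibleInput u → χ ‖u 0‖ ≤ ‖x‖ →
      ∀ ψs : ℝ → X, IsMildSolution T f x u ψs →
        DiniDerivAlong V ψs x ≤ ((-α ‖x‖ : ℝ) : EReal)

end Defs


section Aux

lemma classKL_exp {M lam : ℝ} (hM : 0 < M) (hlam : 0 < lam) :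
    ClassKL (fun r t => M * r * Real.exp (-lam * t)) := by
  refine ⟨by fun_prop, ?_, ?_⟩
  · intro t ht
    refine ⟨by fun_prop, ?_, by simp⟩
    intro a _ b _ hab
    exact mul_lt_mul_of_pos_right (mul_lt_mul_of_pos_left hab hM) (Real.exp_pos _)
  · intro r hr
    constructor
    · intro a _ b _ hab
      have : Real.exp (-lam * b) < Real.exp (-lam * a) := by
        apply Real.exp_lt_exp.2; nlinarith
      exact mul_lt_mul_of_pos_left this (by positivity)
    · have h1 : Tendsto (fun t : ℝ => -lam * t) atTop atBot :=
        Tendsto.const_mul_atTop_of_neg (neg_neg_iff_pos.mpr hlam) tendsto_id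
      simpa using (Real.tendsto_exp_atBot.comp h1).const_mul (M * r)

lemma classK_linear {c : ℝ} (hc : 0 < c) : ClassK (fun r => c * r) := by
  refine ⟨by fun_prop, ?_, by simp⟩
  intro a _ b _ hab
  exact mul_lt_mul_of_pos_left hab hc

/-- 0-UGAS implies exponential stability. -/
lemma KL_to_exp {X : Type*} [NormedAddCommGroup X] [NormedSpace ℝ X]
    (T : ℝ → X →L[ℝ] X) (hT : IsC0Semigroup T)
    (h : ∃ β : ℝ → ℝ → ℝ, ClassKL β ∧ ∀ (x : X) (t : ℝ), 0 ≤ t → ‖T t x‖ ≤ β ‖x‖ t) :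
    ∃ M lam : ℝ, 0 < M ∧ 0 < lam ∧ ∀ t : ℝ, 0 ≤ t →
      ‖T t‖ ≤ M * Real.exp (-lam * t) := by
  obtain ⟨β, ⟨_, hK, hL⟩, hb⟩ := h
  have hβpos : ∀ t : ℝ, 0 ≤ t → 0 < β 1 t := by
    intro t ht
    obtain ⟨_, hmono, hzero⟩ := hK t ht
    have := hmono Set.self_mem_Ici (by norm_num : (1:ℝ) ∈ Ici 0) one_pos
    simpa [hzero] using this
  have hop : ∀ t : ℝ, 0 ≤ t → ‖T t‖ ≤ β 1 t := by
    intro t ht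
    apply ContinuousLinearMap.opNorm_le_bound _ (hβpos t ht).le
    intro x
    rcases eq_or_ne x 0 with rfl | hx
    · simp [(hβpos t ht).le]
    · have hxn : (0:ℝ) < ‖x‖ := norm_pos_iff.mpr hx
      have hunit : ‖(‖x‖⁻¹ • x)‖ = 1 := norm_smul_inv_norm hx
      have h1 : ‖T t (‖x‖⁻¹ • x)‖ ≤ β 1 t := by
        have := hb (‖x‖⁻¹ • x) t ht
        rwa [hunit] at this
      have h2 : T t x = ‖x‖ • T t (‖x‖⁻¹ • x) := by
        rw [(T t).map_smul, smul_inv_smul₀ hxn.ne']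
      rw [h2, norm_smul, Real.norm_eq_abs, abs_of_pos hxn, mul_comm]
      exact mul_le_mul_of_nonneg_right h1 hxn.le
  obtain ⟨hanti, htend⟩ := hL 1 one_pos
  have hev : ∀ᶠ t in atTop, β 1 t < 1/2 := by
    have := htend (Iio_mem_nhds (by norm_num : (0:ℝ) < 1/2))
    simpa [Filter.mem_map] using this
  obtain ⟨t₀, ht₀1, ht₀half⟩ : ∃ t₀ : ℝ, 1 ≤ t₀ ∧ β 1 t₀ < 1/2 := by
    rcases (hev.and (eventually_ge_atTop 1)).exists with ⟨t₀, h1, h2⟩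
    exact ⟨t₀, h2, h1⟩
  have ht₀pos : (0:ℝ) < t₀ := lt_of_lt_of_le one_pos ht₀1
  set C := β 1 0 with hC
  have hCpos : 0 < C := hβpos 0 le_rfl
  have hβle : ∀ t : ℝ, 0 ≤ t → β 1 t ≤ C := by
    intro t ht
    rcases eq_or_lt_of_le ht with rfl | ht'
    · exact le_rfl
    · exact (hanti Set.self_mem_Ici (Set.mem_Ici.mpr ht) ht').le
  have hTbd : ∀ t : ℝ, 0 ≤ t → ‖T t‖ ≤ C := fun t ht => (hop t ht).trans (hβle t ht)
  have hThalf : ‖T t₀‖ ≤ 1/2 := (hop t₀ ht₀pos.le).trans ht₀half.le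
  have hiter : ∀ n : ℕ, ∀ r : ℝ, 0 ≤ r → ‖T (r + n * t₀)‖ ≤ C * (1/2)^n := by
    intro n
    induction n with
    | zero => intro r hr; simpa using hTbd r hr
    | succ n ih =>
      intro r hr
      have heq : r + (n+1 : ℕ) * t₀ = t₀ + (r + n * t₀) := by push_cast; ring
      have harg : (0:ℝ) ≤ r + n * t₀ := by positivity
      rw [heq, hT.2.1 t₀ ht₀pos.le _ harg]
      calc ‖(T t₀).comp (T (r + n * t₀))‖ ≤ ‖T t₀‖ * ‖T (r + n*t₀)‖ :=
            ContinuousLinearMap.opNorm_comp_le _ _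
        _ ≤ (1/2) * (C * (1/2)^n) := by
            apply mul_le_mul hThalf (ih r hr) (norm_nonneg _) (by norm_num)
        _ = C * (1/2)^(n+1) := by ring
  refine ⟨2 * C, Real.log 2 / t₀, by positivity, by positivity, ?_⟩
  intro t ht
  set n := ⌊t / t₀⌋₊ with hn
  have hdiv : 0 ≤ t / t₀ := by positivity
  have hfl : (n : ℝ) ≤ t / t₀ := Nat.floor_le hdiv
  have hfl2 : t / t₀ < n + 1 := Nat.lt_floor_add_one _
  have hr : 0 ≤ t - n * t₀ := by
    have := (le_div_iff₀ ht₀pos).mp hfl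
    linarith
  have h1 : ‖T t‖ ≤ C * (1/2)^n := by
    have := hiter n (t - n * t₀) hr
    simpa using this
  have h2 : ((1:ℝ)/2)^n ≤ 2 * Real.exp (-(Real.log 2 / t₀) * t) := by
    have hpow : ((1:ℝ)/2)^n = Real.exp (-(n * Real.log 2)) := by
      rw [← Real.exp_log (show (0:ℝ) < 1/2 by norm_num)]
      rw [← Real.exp_nat_mul]
      congr 1
      rw [show (1:ℝ)/2 = 2⁻¹ by norm_num, Real.log_inv]
      ring
    have h2e : 2 * Real.exp (-(Real.log 2 / t₀) * t)
        = Real.exp (Real.log 2 + -(Real.log 2 / t₀) * t) := by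
      rw [Real.exp_add, Real.exp_log two_pos]
    rw [hpow, h2e]
    apply Real.exp_le_exp.2
    have hlog2 : 0 < Real.log 2 := Real.log_pos one_lt_two
    have h3 : t / t₀ * Real.log 2 < (n + 1) * Real.log 2 :=
      mul_lt_mul_of_pos_right hfl2 hlog2
    have ht' : Real.log 2 / t₀ * t = t / t₀ * Real.log 2 := by ring
    nlinarith
  calc ‖T t‖ ≤ C * (1/2)^n := h1
    _ ≤ C * (2 * Real.exp (-(Real.log 2 / t₀) * t)) :=
        mul_le_mul_of_nonneg_left h2 hCpos.le
    _ = 2 * C * Real.exp (-(Real.log 2 / t₀) * t) := by ring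

/-- exponential stability gives the ISS estimate. -/
lemma exp_to_ISS {X : Type*} [NormedAddCommGroup X] [NormedSpace ℝ X]
    {U : Type*} [NormedAddCommGroup U] [NormedSpace ℝ U]
    (T : ℝ → X →L[ℝ] X) (B : U →L[ℝ] X) {M lam : ℝ} (hM : 0 < M) (hlam : 0 < lam)
    (hexp : ∀ t : ℝ, 0 ≤ t → ‖T t‖ ≤ M * Real.exp (-lam * t))
    (x : X) (u : ℝ → U) {C : ℝ} (hC : ∀ s : ℝ, 0 ≤ s → ‖u s‖ ≤ C)
    (t : ℝ) (ht : 0 ≤ t) :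
    ‖T t x + ∫ s in (0:ℝ)..t, T (t - s) (B (u s))‖ ≤
      M * ‖x‖ * Real.exp (-lam * t) + (M * (‖B‖ + 1) / lam) * supNorm u := by
  set K := supNorm u with hKdef
  have hbdd : BddAbove (Set.range fun s : Ici (0:ℝ) => ‖u ↑s‖) :=
    ⟨C, by rintro _ ⟨s, rfl⟩; exact hC s s.2⟩
  have hKs : ∀ s : ℝ, 0 ≤ s → ‖u s‖ ≤ K := fun s hs =>
    le_ciSup hbdd (⟨s, hs⟩ : Ici (0:ℝ))
  have hK0 : 0 ≤ K := le_trans (norm_nonneg _) (hKs 0 le_rfl)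
  set c := ‖B‖ * K with hc
  have hc0 : 0 ≤ c := mul_nonneg (norm_nonneg _) hK0
  have hae : ∀ s ∈ Set.uIoc (0:ℝ) t, ‖T (t - s) (B (u s))‖ ≤ M * Real.exp (-lam * (t - s)) * c := by
    intro s hs
    rw [uIoc_of_le ht] at hs
    obtain ⟨hs0, hst⟩ := hs
    have hts : (0:ℝ) ≤ t - s := by linarith
    calc ‖T (t - s) (B (u s))‖ ≤ ‖T (t - s)‖ * ‖B (u s)‖ := (T (t-s)).le_opNorm _
      _ ≤ (M * Real.exp (-lam * (t - s))) * (‖B‖ * ‖u s‖) := by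
          apply mul_le_mul (hexp _ hts) ((B).le_opNorm _) (norm_nonneg _)
          positivity
      _ ≤ M * Real.exp (-lam * (t - s)) * c := by
          apply mul_le_mul_of_nonneg_left _ (by positivity)
          exact mul_le_mul_of_nonneg_left (hKs s hs0.le) (norm_nonneg _)
  have hgint : IntervalIntegrable (fun s => M * Real.exp (-lam * (t - s)) * c)
      MeasureTheory.volume 0 t := (by fun_prop : Continuous _).intervalIntegrable _ _
  have hint : ‖∫ s in (0:ℝ)..t, T (t - s) (B (u s))‖ ≤
      |∫ s in (0:ℝ)..t, M * Real.exp (-lam * (t - s)) * c| := by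
    apply intervalIntegral.norm_integral_le_abs_of_norm_le _ hgint
    exact (MeasureTheory.ae_restrict_iff' measurableSet_uIoc).2 (Filter.Eventually.of_forall hae)
  have hFTC : ∫ s in (0:ℝ)..t, Real.exp (-lam * (t - s)) =
      lam⁻¹ - lam⁻¹ * Real.exp (-lam * t) := by
    have hderiv : ∀ s ∈ Set.uIcc (0:ℝ) t,
        HasDerivAt (fun s : ℝ => lam⁻¹ * Real.exp (-lam * (t - s)))
          (Real.exp (-lam * (t - s))) s := by
      intro s _
      have hd1 : HasDerivAt (fun s : ℝ => -lam * (t - s)) lam s := by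
        simpa using ((hasDerivAt_id s).const_sub t).const_mul (-lam)
      have hd2 := (Real.hasDerivAt_exp (-lam * (t - s))).comp s hd1
      have hd3 := hd2.const_mul lam⁻¹
      exact hd3.congr_deriv (by rw [mul_left_comm, inv_mul_cancel₀ hlam.ne', mul_one])
    have hintg : IntervalIntegrable (fun s => Real.exp (-lam * (t - s)))
        MeasureTheory.volume 0 t := (by fun_prop : Continuous _).intervalIntegrable _ _
    have := intervalIntegral.integral_eq_sub_of_hasDerivAt hderiv hintg
    rw [this]
    simp
  have hval : ∫ s in (0:ℝ)..t, M * Real.exp (-lam * (t - s)) * c =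
      (M * c) * (lam⁻¹ - lam⁻¹ * Real.exp (-lam * t)) := by
    have heq : (fun s => M * Real.exp (-lam * (t - s)) * c) =
        fun s => (M * c) * Real.exp (-lam * (t - s)) := by funext s; ring
    rw [heq, intervalIntegral.integral_const_mul, hFTC]
  have hexp1 : Real.exp (-lam * t) ≤ 1 := by
    apply Real.exp_le_one_iff.2; nlinarith
  have habs : |∫ s in (0:ℝ)..t, M * Real.exp (-lam * (t - s)) * c| ≤ M * c / lam := by
    rw [hval, abs_of_nonneg]
    · have hle : lam⁻¹ - lam⁻¹ * Real.exp (-lam * t) ≤ lam⁻¹ := by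
        have : 0 ≤ lam⁻¹ * Real.exp (-lam * t) := by positivity
        linarith
      calc (M * c) * (lam⁻¹ - lam⁻¹ * Real.exp (-lam * t)) ≤ (M * c) * lam⁻¹ :=
            mul_le_mul_of_nonneg_left hle (by positivity)
        _ = M * c / lam := by rw [div_eq_mul_inv]
    · have h1 : 0 ≤ lam⁻¹ - lam⁻¹ * Real.exp (-lam * t) := by
        have := mul_le_mul_of_nonneg_left hexp1 (le_of_lt (inv_pos.2 hlam))
        linarith
      positivity
  have hTx : ‖T t x‖ ≤ M * ‖x‖ * Real.exp (-lam * t) := by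
    calc ‖T t x‖ ≤ ‖T t‖ * ‖x‖ := (T t).le_opNorm x
      _ ≤ (M * Real.exp (-lam * t)) * ‖x‖ :=
          mul_le_mul_of_nonneg_right (hexp t ht) (norm_nonneg x)
      _ = M * ‖x‖ * Real.exp (-lam * t) := by ring
  have hgamma : M * c / lam ≤ (M * (‖B‖ + 1) / lam) * K := by
    rw [hc, div_mul_eq_mul_div, div_le_div_iff_of_pos_right hlam]
    nlinarith
  calc ‖T t x + ∫ s in (0:ℝ)..t, T (t - s) (B (u s))‖
      ≤ ‖T t x‖ + ‖∫ s in (0:ℝ)..t, T (t - s) (B (u s))‖ := norm_add_le _ _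
    _ ≤ M * ‖x‖ * Real.exp (-lam * t) + M * c / lam := add_le_add hTx (hint.trans habs)
    _ ≤ M * ‖x‖ * Real.exp (-lam * t) + (M * (‖B‖ + 1) / lam) * K :=
        add_le_add_right hgamma _

end Aux

/-- For the linear system `ẋ = Ax + Bu` with bounded input operator `B`,
the following are equivalent: (i) ISS, (ii) 0-UGAS, (iii) exponential stability of the
semigroup. -/
theorem linear_iss_characterization
    {X : Type*} [NormedAddCommGroup X] [NormedSpace ℝ X] [CompleteSpace X]
    {U : Type*} [NormedAddCommGroup U] [NormedSpace ℝ U]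
    (T : ℝ → X →L[ℝ] X) (hT : IsC0Semigroup T)
    (B : U →L[ℝ] X) :
    -- (i) ISS ↔ (ii) 0-UGAS
    ((∃ (β : ℝ → ℝ → ℝ) (γ : ℝ → ℝ), ClassKL β ∧ ClassK γ ∧
        ∀ (x : X) (u : ℝ → U), AdmissibleInput u → ∀ t : ℝ, 0 ≤ t →
          ‖T t x + ∫ s in (0:ℝ)..t, T (t - s) (B (u s))‖ ≤ β ‖x‖ t + γ (supNorm u))
      ↔
      (∃ β : ℝ → ℝ → ℝ, ClassKL β ∧ ∀ (x : X) (t : ℝ), 0 ≤ t → ‖T t x‖ ≤ β ‖x‖ t))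
    ∧
    -- (ii) 0-UGAS ↔ (iii) exponential stability
    ((∃ β : ℝ → ℝ → ℝ, ClassKL β ∧ ∀ (x : X) (t : ℝ), 0 ≤ t → ‖T t x‖ ≤ β ‖x‖ t)
      ↔
      (∃ M lam : ℝ, 0 < M ∧ 0 < lam ∧ ∀ t : ℝ, 0 ≤ t →
        ‖T t‖ ≤ M * Real.exp (-lam * t))) := by
  
  have expToKL : (∃ M lam : ℝ, 0 < M ∧ 0 < lam ∧ ∀ t : ℝ, 0 ≤ t →
        ‖T t‖ ≤ M * Real.exp (-lam * t)) →
      (∃ β : ℝ → ℝ → ℝ, ClassKL β ∧ ∀ (x : X) (t : ℝ), 0 ≤ t → ‖T t x‖ ≤ β ‖x‖ t) := by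
    rintro ⟨M, lam, hM, hlam, h⟩
    refine ⟨fun r t => M * r * Real.exp (-lam * t), classKL_exp hM hlam, ?_⟩
    intro x t ht
    calc ‖T t x‖ ≤ ‖T t‖ * ‖x‖ := (T t).le_opNorm x
      _ ≤ (M * Real.exp (-lam * t)) * ‖x‖ :=
          mul_le_mul_of_nonneg_right (h t ht) (norm_nonneg x)
      _ = M * ‖x‖ * Real.exp (-lam * t) := by ring
  have klToExp := KL_to_exp T hT
  constructor
  · constructor
    · rintro ⟨β, γ, hβ, hγ, h⟩
      refine ⟨β, hβ, ?_⟩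
      intro x t ht
      have hadm : AdmissibleInput (fun _ : ℝ => (0:U)) :=
        ⟨fun a b => ⟨∅, fun t _ _ => continuousAt_const⟩, 0, fun t _ => by simp⟩
      have h0 := h x (fun _ => 0) hadm t ht
      haveI : Nonempty (Ici (0:ℝ)) := ⟨⟨0, Set.self_mem_Ici⟩⟩
      have hsup : supNorm (U := U) (fun _ : ℝ => (0:U)) = 0 := by
        simp [supNorm]
      rw [hsup, hγ.2.2] at h0
      simpa using h0
    · intro h
      obtain ⟨M, lam, hM, hlam, hexp⟩ := klToExp h
      refine ⟨fun r t => M * r * Real.exp (-lam * t), fun r => (M * (‖B‖ + 1) / lam) * r,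
        classKL_exp hM hlam, classK_linear (by positivity), ?_⟩
      intro x u hu t ht
      obtain ⟨_, C, hC⟩ := hu
      exact exp_to_ISS T B hM hlam hexp x u hC t ht
  · exact ⟨klToExp, expToKL⟩
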